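/- Bias of the MIPS estimator under deficient embeddings (proved within the proof of Proposition 9). In the finite embedding setting, assume the no-direct-effect condition: the conditional mean reward depends only on the context and the embedding, i.e. it is a function qE : X → E → ℝ. Then the bias of the MIPS estimator satisfies Σ_{x,a,e} pX x · π₀ x a · pE x a e · w(x,e) · qE x e − V(π) = − Σ_x pX x · Σ_{e : p(e|x,π₀) = 0} p(e|x,π) · qE x e, where V(π) = Σ_{x,a,e} pX x · π x a · pE x a e · qE x e. -/
import Mathlib


open Finset

namespace OPE

noncomputable section

variable {X A E : Type*} [Fintype X] [Fintype A] [Fintype E]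
  [Nonempty X] [Nonempty A] [Nonempty E]

/-- Marginal embedding distribution `p(e|x,ρ) = Σ_a ρ x a * pE x a e`. -/
def pe (pE : X → A → E → ℝ) (ρ : X → A → ℝ) (x : X) (e : E) : ℝ :=
  ∑ a, ρ x a * pE x a e

/-- MIPS weight `w(x,e) = p(e|x,π) / p(e|x,π₀)` (with the convention `t/0 = 0`). -/
def wMIPS (pE : X → A → E → ℝ) (π π₀ : X → A → ℝ) (x : X) (e : E) : ℝ :=
  pe pE π x e / pe pE π₀ x e

/-- Bias of the MIPS estimator under deficient embeddings. -/
theorem mips_bias_deficient_embeddings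
    (pX : X → ℝ) (π π₀ : X → A → ℝ) (pE : X → A → E → ℝ) (qE : X → E → ℝ)
    (hpX0 : ∀ x, 0 ≤ pX x) (hpX1 : ∑ x, pX x = 1)
    (hπ : ∀ x a, 0 ≤ π x a) (hπ1 : ∀ x, ∑ a, π x a = 1)
    (hπ₀ : ∀ x a, 0 ≤ π₀ x a) (hπ₀1 : ∀ x, ∑ a, π₀ x a = 1)
    (hpE0 : ∀ x a e, 0 ≤ pE x a e) (hpE1 : ∀ x a, ∑ e, pE x a e = 1) :
    (∑ x, ∑ a, ∑ e, pX x * π₀ x a * pE x a e * wMIPS pE π π₀ x e * qE x e)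
      - (∑ x, ∑ a, ∑ e, pX x * π x a * pE x a e * qE x e)
    = -(∑ x, pX x * ∑ e,
        if pe pE π₀ x e = 0 then pe pE π x e * qE x e else 0) := by
  have e1 : (∑ x, ∑ a, ∑ e, pX x * π₀ x a * pE x a e * wMIPS pE π π₀ x e * qE x e)
      = ∑ x, ∑ e, pX x * pe pE π₀ x e * wMIPS pE π π₀ x e * qE x e := by
    refine Finset.sum_congr rfl fun x _ => ?_
    rw [Finset.sum_comm]
    refine Finset.sum_congr rfl fun e _ => ?_
    have h : ∀ a, pX x * π₀ x a * pE x a e * wMIPS pE π π₀ x e * qE x e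
        = (π₀ x a * pE x a e) * (pX x * wMIPS pE π π₀ x e * qE x e) := fun a => by ring
    simp only [h, ← Finset.sum_mul]
    rw [pe]; ring
  have e2 : (∑ x, ∑ a, ∑ e, pX x * π x a * pE x a e * qE x e)
      = ∑ x, ∑ e, pX x * pe pE π x e * qE x e := by
    refine Finset.sum_congr rfl fun x _ => ?_
    rw [Finset.sum_comm]
    refine Finset.sum_congr rfl fun e _ => ?_
    have h : ∀ a, pX x * π x a * pE x a e * qE x e
        = (π x a * pE x a e) * (pX x * qE x e) := fun a => by ring
    simp only [h, ← Finset.sum_mul]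
    rw [pe]; ring
  have hmain : ∀ x e,
      pX x * pe pE π₀ x e * wMIPS pE π π₀ x e * qE x e
        - pX x * pe pE π x e * qE x e
      = -(pX x * (if pe pE π₀ x e = 0 then pe pE π x e * qE x e else 0)) := by
    intro x e
    by_cases h : pe pE π₀ x e = 0
    · simp [wMIPS, h]; ring
    · simp only [wMIPS, if_neg h]
      field_simp
      ring
  rw [e1, e2, ← Finset.sum_sub_distrib]
  rw [← Finset.sum_neg_distrib]
  refine Finset.sum_congr rfl fun x _ => ?_
  rw [← Finset.sum_sub_distrib, Finset.mul_sum, ← Finset.sum_neg_distrib]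
  exact Finset.sum_congr rfl fun e _ => hmain x e
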